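/- Let c : Fin k → Fin L assign to each letter of a k-letter alphabet one of L ≥ 3 categories, with every category nonempty (c surjective), and let n ≥ 2. Then there exists a U-cycle for the set of non-passwords of length n, i.e., the set of words w of length n over Fin k for which some category ℓ : Fin L satisfies c(w i) ≠ ℓ for all i. -/

import Mathlib

set_option linter.unusedSectionVars false
set_option linter.unnecessarySimpa false
set_option maxHeartbeats 1000000

/-- A U-cycle for a finite set `S` of `n`-letter words over the alphabet `Fin k`. -/
def IsUCycle {n k : ℕ} (S : Finset (Fin n → Fin k)) (s : ZMod S.card → Fin k) : Prop :=
  Set.BijOn (fun i : ZMod S.card => fun j : Fin n => s (i + ((j : ℕ) : ZMod S.card)))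
    Set.univ ↑S

/-- `w` is a non-password with respect to the category map `c`: some category `ℓ`
has no representative among the letters of `w`. -/
def NonPassword {n k L : ℕ} (c : Fin k → Fin L) (w : Fin n → Fin k) : Prop :=
  ∃ ℓ : Fin L, ∀ i : Fin n, c (w i) ≠ ℓ


instance {n k L : ℕ} (c : Fin k → Fin L) :
    DecidablePred (fun w : Fin n → Fin k => NonPassword c w) := fun w =>
  inferInstanceAs (Decidable (∃ ℓ : Fin L, ∀ i : Fin n, c (w i) ≠ ℓ))

section Euler
variable {α V : Type*} [Fintype α] [DecidableEq α]

private lemma pow_mul_swap_eq (π : Equiv.Perm α) (a b x : α) (T : ℕ)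
    (h : ∀ s < T, (π ^ s) x ≠ a ∧ (π ^ s) x ≠ b) :
    ∀ s ≤ T, ((π * Equiv.swap a b) ^ s) x = (π ^ s) x := by
  intro s hs
  induction s with
  | zero => simp
  | succ s ih =>
    have hs' : s ≤ T := Nat.le_of_succ_le hs
    have hlt : s < T := hs
    rw [pow_succ', pow_succ', Equiv.Perm.mul_apply, Equiv.Perm.mul_apply, ih hs',
      Equiv.Perm.mul_apply, Equiv.swap_apply_of_ne_of_ne (h s hlt).1 (h s hlt).2]

private lemma sameCycle_swap_aux (π : Equiv.Perm α) {a b x : α}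
    (hab : ¬ π.SameCycle a b) (hx : π.SameCycle x a) :
    (π * Equiv.swap a b).SameCycle x a := by
  obtain ⟨t0, -, ht0⟩ := hx.exists_pow_eq'
  have hex : ∃ t, (π ^ t) x = a := ⟨t0, ht0⟩
  have hTa : (π ^ Nat.find hex) x = a := Nat.find_spec hex
  have hne : ∀ s < Nat.find hex, (π ^ s) x ≠ a ∧ (π ^ s) x ≠ b := by
    intro s hsT
    refine ⟨Nat.find_min hex hsT, fun hb => ?_⟩
    exact hab (hx.symm.trans ⟨(s : ℤ), by simpa [zpow_natCast] using hb⟩)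
  exact ⟨(Nat.find hex : ℤ), by
    rw [zpow_natCast]
    exact (pow_mul_swap_eq π a b x _ hne _ le_rfl).trans hTa⟩

private lemma sameCycle_mul_swap (π : Equiv.Perm α) {a b : α} (hab : ¬ π.SameCycle a b) :
    ∀ x, (π.SameCycle a x ∨ π.SameCycle b x) → (π * Equiv.swap a b).SameCycle a x := by
  have hba : ¬ π.SameCycle b a := fun h => hab h.symm
  have hB : ∀ x, π.SameCycle x b → (π * Equiv.swap a b).SameCycle x b := by
    intro x hxb
    have := sameCycle_swap_aux π hba hxb
    rwa [Equiv.swap_comm] at this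
  have hC : (π * Equiv.swap a b).SameCycle a b := by
    have h1 : (π * Equiv.swap a b) a = π b := by
      rw [Equiv.Perm.mul_apply, Equiv.swap_apply_left]
    have h2 : π.SameCycle (π b) b := ⟨(-1 : ℤ), by simp⟩
    have hC1 : (π * Equiv.swap a b).SameCycle a (π b) := ⟨(1 : ℤ), by simp [h1]⟩
    exact hC1.trans (hB _ h2)
  rintro x (hax | hbx)
  · exact (sameCycle_swap_aux π hab hax.symm).symm
  · exact hC.trans (hB x hbx.symm).symm

private lemma exists_crossing {β : Type*} {R : β → β → Prop} {P : β → Prop} {x y : β}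
    (h : Relation.ReflTransGen R x y) (hx : P x) (hy : ¬ P y) :
    ∃ u u', R u u' ∧ P u ∧ ¬ P u' := by
  induction h with
  | refl => exact absurd hx hy
  | @tail b c h1 h2 ih =>
    by_cases hb : P b
    · exact ⟨b, c, h2, hb, hy⟩
    · exact ih hb

private lemma euler_step (f g : α → V) (π : Equiv.Perm α) (hπ : ∀ x, f (π x) = g x)
    (x₀ u u' : α)
    (hu : π.SameCycle x₀ u) (hu' : ¬ π.SameCycle x₀ u')
    (hR : f u = f u' ∨ f u = g u' ∨ g u = f u' ∨ g u = g u') :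
    ∃ π' : Equiv.Perm α, (∀ x, f (π' x) = g x) ∧
      (∀ z, π.SameCycle x₀ z → π'.SameCycle x₀ z) ∧ π'.SameCycle x₀ u' := by
  obtain ⟨w, w', hff, hw, hw'c⟩ :
      ∃ w w', f w = f w' ∧ π.SameCycle x₀ w ∧ π.SameCycle w' u' := by
    rcases hR with h | h | h | h
    · exact ⟨u, u', h, hu, Equiv.Perm.SameCycle.refl _ _⟩
    · exact ⟨u, π u', by rw [h, hπ], hu, ⟨(-1 : ℤ), by simp⟩⟩
    · exact ⟨π u, u', by rw [hπ, h], hu.trans ⟨(1 : ℤ), by simp⟩, Equiv.Perm.SameCycle.refl _ _⟩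
    · exact ⟨π u, π u', by rw [hπ, hπ, h], hu.trans ⟨(1 : ℤ), by simp⟩, ⟨(-1 : ℤ), by simp⟩⟩
  have hw' : ¬ π.SameCycle x₀ w' := fun h => hu' (h.trans hw'c)
  set a := π⁻¹ w with ha
  set b := π⁻¹ w' with hb
  have hπa : π a = w := by simp [ha]
  have hπb : π b = w' := by simp [hb]
  have hga : g a = f w := by rw [← hπ a, hπa]
  have hgb : g b = f w' := by rw [← hπ b, hπb]
  have hgab : g a = g b := by rw [hga, hgb, hff]
  have hxa : π.SameCycle x₀ a := hw.trans ⟨(-1 : ℤ), by simp [hπa]; rfl⟩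
  have hbw' : π.SameCycle b w' := ⟨(1 : ℤ), by simp [hπb]⟩
  have hab : ¬ π.SameCycle a b := fun h => hw' ((hxa.trans h).trans hbw')
  refine ⟨π * Equiv.swap a b, ?_, ?_, ?_⟩
  · intro x
    rcases eq_or_ne x a with rfl | hxa'
    · rw [Equiv.Perm.mul_apply, Equiv.swap_apply_left, hπ, ← hgab]
    rcases eq_or_ne x b with rfl | hxb'
    · rw [Equiv.Perm.mul_apply, Equiv.swap_apply_right, hπ, hgab]
    · rw [Equiv.Perm.mul_apply, Equiv.swap_apply_of_ne_of_ne hxa' hxb', hπ]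
  · intro z hz
    have h1 := sameCycle_mul_swap π hab x₀ (Or.inl hxa.symm)
    have h2 := sameCycle_mul_swap π hab z (Or.inl (hxa.symm.trans hz))
    exact h1.symm.trans h2
  · have h1 := sameCycle_mul_swap π hab x₀ (Or.inl hxa.symm)
    have h2 := sameCycle_mul_swap π hab u' (Or.inr (hbw'.trans hw'c.symm.symm))
    exact h1.symm.trans h2

private lemma euler_exists_perm [Nonempty α] (f g : α → V)
    (deg : ∀ v, Nat.card {x // f x = v} = Nat.card {x // g x = v})
    (conn : ∀ x y : α, Relation.ReflTransGen
      (fun x y => f x = f y ∨ f x = g y ∨ g x = f y ∨ g x = g y) x y) :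
    ∃ π : Equiv.Perm α, (∀ x, f (π x) = g x) ∧ ∀ x y, π.SameCycle x y := by
  classical
  have e : ∀ v, {x // g x = v} ≃ {x // f x = v} := fun v =>
    Fintype.equivOfCardEq (by
      rw [← Nat.card_eq_fintype_card, ← Nat.card_eq_fintype_card]
      exact (deg v).symm)
  have x₀ : α := Classical.arbitrary α
  suffices h : ∀ d (π : Equiv.Perm α), (∀ x, f (π x) = g x) →
      Fintype.card α ≤ d + (Finset.univ.filter fun z => π.SameCycle x₀ z).card →
      ∃ π' : Equiv.Perm α, (∀ x, f (π' x) = g x) ∧ ∀ y, π'.SameCycle x₀ y by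
    obtain ⟨π, hπ, hall⟩ := h (Fintype.card α) (Equiv.ofFiberEquiv e)
      (fun a => Equiv.ofFiberEquiv_map e a) (Nat.le_add_right _ _)
    exact ⟨π, hπ, fun x y => (hall x).symm.trans (hall y)⟩
  intro d
  induction d with
  | zero =>
    intro π hπ hcard
    refine ⟨π, hπ, fun y => ?_⟩
    have huniv : (Finset.univ.filter fun z => π.SameCycle x₀ z) = Finset.univ :=
      Finset.eq_univ_of_card _ (le_antisymm (Finset.card_le_univ _) (by simpa using hcard))
    have := Finset.mem_univ y
    rw [← huniv, Finset.mem_filter] at this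
    exact this.2
  | succ d ih =>
    intro π hπ hcard
    by_cases hall : ∀ y, π.SameCycle x₀ y
    · exact ⟨π, hπ, hall⟩
    push_neg at hall
    obtain ⟨y₀, hy₀⟩ := hall
    obtain ⟨u, u', hR, hu, hu'⟩ :=
      exists_crossing (conn x₀ y₀) (Equiv.Perm.SameCycle.refl _ _) hy₀
    obtain ⟨π', hπ', hpres, hnew⟩ := euler_step f g π hπ x₀ u u' hu hu' hR
    apply ih π' hπ'
    have hsub : insert u' (Finset.univ.filter fun z => π.SameCycle x₀ z) ⊆
        (Finset.univ.filter fun z => π'.SameCycle x₀ z) := by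
      intro z hz
      rw [Finset.mem_insert] at hz
      rcases hz with rfl | hz
      · exact Finset.mem_filter.2 ⟨Finset.mem_univ _, hnew⟩
      · exact Finset.mem_filter.2 ⟨Finset.mem_univ _, hpres z (Finset.mem_filter.1 hz).2⟩
    have hnotmem : u' ∉ (Finset.univ.filter fun z => π.SameCycle x₀ z) := by
      simp [hu']
    have := Finset.card_le_card hsub
    rw [Finset.card_insert_of_notMem hnotmem] at this
    omega

private lemma cycle_to_fun [Nonempty α] (N : ℕ) (hN : N = Fintype.card α)
    (π : Equiv.Perm α) (hall : ∀ x y, π.SameCycle x y) :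
    ∃ e : ZMod N → α, Function.Bijective e ∧ ∀ i, e (i + 1) = π (e i) := by
  classical
  obtain ⟨x₀⟩ := ‹Nonempty α›
  have surjN : ∀ y, ∃ t : ℕ, (π ^ t) x₀ = y := by
    intro y
    obtain ⟨t, -, h⟩ := (hall x₀ y).exists_pow_eq'
    exact ⟨t, h⟩
  have hposex : ∃ t, 0 < t ∧ (π ^ t) x₀ = x₀ :=
    ⟨orderOf π, orderOf_pos π, by simp [pow_orderOf_eq_one]⟩
  set d := Nat.find hposex with hd
  obtain ⟨hdpos, hdx⟩ : 0 < d ∧ (π ^ d) x₀ = x₀ := Nat.find_spec hposex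
  have hmul : ∀ q, (π ^ (d * q)) x₀ = x₀ := by
    intro q
    induction q with
    | zero => simp
    | succ q ihq =>
      have : d * (q + 1) = d * q + d := by ring
      rw [this, pow_add, Equiv.Perm.mul_apply, hdx, ihq]
  have periodic : ∀ t : ℕ, (π ^ t) x₀ = (π ^ (t % d)) x₀ := by
    intro t
    conv_lhs => rw [← Nat.div_add_mod t d]
    rw [pow_add, pow_mul_comm, Equiv.Perm.mul_apply, hmul]
  have injlt : ∀ s t : ℕ, s ≤ t → t < d → (π ^ s) x₀ = (π ^ t) x₀ → s = t := by
    intro s t hst htd hEq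
    by_contra hne
    have h1 : 0 < t - s := by omega
    have h2 : (π ^ (t - s) * π ^ s) x₀ = (π ^ s) x₀ := by
      rw [← pow_add]
      rw [Nat.sub_add_cancel hst]
      exact hEq.symm
    rw [pow_mul_comm, Equiv.Perm.mul_apply] at h2
    have h3 : (π ^ (t - s)) x₀ = x₀ := (π ^ s).injective h2
    exact Nat.find_min hposex (by omega : t - s < d) ⟨h1, h3⟩
  have hbij : Function.Bijective (fun t : Fin d => (π ^ (t : ℕ)) x₀) := by
    constructor
    · intro s t hst
      rcases le_total (s : ℕ) (t : ℕ) with h | h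
      · exact Fin.ext (injlt _ _ h t.isLt hst)
      · exact (Fin.ext (injlt _ _ h s.isLt hst.symm)).symm
    · intro y
      obtain ⟨t, ht⟩ := surjN y
      refine ⟨⟨t % d, Nat.mod_lt _ hdpos⟩, ?_⟩
      show (π ^ (t % d)) x₀ = y
      rw [← periodic, ht]
  have hdN : d = N := by
    have := Fintype.card_of_bijective hbij
    simp only [Fintype.card_fin] at this
    omega
  haveI : NeZero N := ⟨by omega⟩
  refine ⟨fun i => (π ^ i.val) x₀, ⟨?_, ?_⟩, ?_⟩
  · intro i j hij
    have hiv : i.val < d := by rw [hdN]; exact ZMod.val_lt i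
    have hjv : j.val < d := by rw [hdN]; exact ZMod.val_lt j
    apply ZMod.val_injective
    rcases le_total i.val j.val with h | h
    · exact injlt _ _ h hjv hij
    · exact (injlt _ _ h hiv hij.symm).symm
  · intro y
    obtain ⟨t, ht⟩ := surjN y
    refine ⟨((t % d : ℕ) : ZMod N), ?_⟩
    show (π ^ ((t % d : ℕ) : ZMod N).val) x₀ = y
    have hmd : t % d < d := Nat.mod_lt _ hdpos
    rw [ZMod.val_cast_of_lt (by omega : t % d < N), ← periodic, ht]
  · intro i
    have h1 : (i + 1).val = (i.val + (1 : ZMod N).val) % N := ZMod.val_add i 1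
    have h2 : (1 : ZMod N).val = 1 % N := ZMod.val_one_eq_one_mod N
    have h3 : (i.val + (1 : ZMod N).val) % N = (i.val + 1) % N := by
      rw [h2, Nat.add_mod, Nat.mod_mod_of_dvd, ← Nat.add_mod]
      exact dvd_refl N
    have := periodic (i.val + 1)
    rw [hdN] at this
    show (π ^ (i + 1).val) x₀ = π ((π ^ i.val) x₀)
    rw [h1, h3, ← this, pow_succ', Equiv.Perm.mul_apply]

private lemma euler [Nonempty α] (N : ℕ) (hN : N = Fintype.card α) (f g : α → V)
    (deg : ∀ v, Nat.card {x // f x = v} = Nat.card {x // g x = v})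
    (conn : ∀ x y : α, Relation.ReflTransGen
      (fun x y => f x = f y ∨ f x = g y ∨ g x = f y ∨ g x = g y) x y) :
    ∃ e : ZMod N → α, Function.Bijective e ∧ ∀ i, g (e i) = f (e (i + 1)) := by
  obtain ⟨π, hπ, hall⟩ := euler_exists_perm f g deg conn
  obtain ⟨e, hbij, hstep⟩ := cycle_to_fun N hN π hall
  exact ⟨e, hbij, fun i => by rw [hstep i, hπ]⟩

end Euler

/-- If `c : Fin k → Fin L` assigns to each letter one of `L ≥ 3` categories, every
category is nonempty, and `n ≥ 2`, then there exists a U-cycle for the set of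
non-passwords of length `n` over `Fin k`. -/
theorem exists_ucycle_non_passwords (n k L : ℕ) (c : Fin k → Fin L)
    (hL : 3 ≤ L) (hc : Function.Surjective c) (hn : 2 ≤ n) :
    ∃ s : ZMod (Finset.univ.filter
        (fun w : Fin n → Fin k => NonPassword c w)).card → Fin k,
      IsUCycle (Finset.univ.filter (fun w : Fin n → Fin k => NonPassword c w)) s := by
  classical
  obtain ⟨m, rfl⟩ : ∃ m, n = m + 2 := ⟨n - 2, by omega⟩
  set S := Finset.univ.filter (fun w : Fin (m+2) → Fin k => NonPassword c w) with hSdef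
  -- S is nonempty
  obtain ⟨a₁, ha₁⟩ := hc ⟨1, by omega⟩
  haveI hne : Nonempty {w // w ∈ S} :=
    ⟨⟨fun _ => a₁, Finset.mem_filter.2 ⟨Finset.mem_univ _,
      ⟨⟨0, by omega⟩, fun i => by simp [ha₁, Fin.ext_iff]⟩⟩⟩⟩
  -- degree condition
  have deg : ∀ v : Fin (m+1) → Fin k,
      Nat.card {x : {w // w ∈ S} // Fin.init x.1 = v} =
        Nat.card {x : {w // w ∈ S} // Fin.tail x.1 = v} := by
    intro v
    have hiff : ∀ x : Fin k, NonPassword c (Fin.snoc v x) ↔ NonPassword c (Fin.cons x v) := by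
      intro x
      constructor
      · rintro ⟨ℓ, hℓ⟩
        refine ⟨ℓ, ?_⟩
        rw [Fin.forall_fin_succ'] at hℓ
        simp only [Fin.snoc_castSucc, Fin.snoc_last] at hℓ
        rw [Fin.forall_fin_succ]
        simp only [Fin.cons_zero, Fin.cons_succ]
        exact ⟨hℓ.2, hℓ.1⟩
      · rintro ⟨ℓ, hℓ⟩
        refine ⟨ℓ, ?_⟩
        rw [Fin.forall_fin_succ] at hℓ
        simp only [Fin.cons_zero, Fin.cons_succ] at hℓ
        rw [Fin.forall_fin_succ']
        simp only [Fin.snoc_castSucc, Fin.snoc_last]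
        exact ⟨hℓ.2, hℓ.1⟩
    have E1 : {x : {w // w ∈ S} // Fin.init x.1 = v} ≃
        {x : Fin k // NonPassword c (Fin.snoc v x)} :=
      { toFun := fun w => ⟨w.1.1 (Fin.last (m+1)), by
          obtain ⟨⟨q, hqS⟩, hq⟩ := w
          subst hq
          show NonPassword c (Fin.snoc (Fin.init q) (q (Fin.last (m+1))))
          rw [Fin.snoc_init_self]
          exact (Finset.mem_filter.1 hqS).2⟩
        invFun := fun x => ⟨⟨Fin.snoc v x.1, Finset.mem_filter.2 ⟨Finset.mem_univ _, x.2⟩⟩,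
          Fin.init_snoc _ _⟩
        left_inv := fun w => by
          obtain ⟨⟨q, hqS⟩, hq⟩ := w
          subst hq
          apply Subtype.ext; apply Subtype.ext
          show Fin.snoc (Fin.init q) (q (Fin.last (m+1))) = q
          rw [Fin.snoc_init_self]
        right_inv := fun x => Subtype.ext (by simp) }
    have E2 : {x : {w // w ∈ S} // Fin.tail x.1 = v} ≃
        {x : Fin k // NonPassword c (Fin.cons x v)} :=
      { toFun := fun w => ⟨w.1.1 0, by
          obtain ⟨⟨q, hqS⟩, hq⟩ := w
          subst hq
          show NonPassword c (Fin.cons (q 0) (Fin.tail q))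
          rw [Fin.cons_self_tail]
          exact (Finset.mem_filter.1 hqS).2⟩
        invFun := fun x => ⟨⟨Fin.cons x.1 v, Finset.mem_filter.2 ⟨Finset.mem_univ _, x.2⟩⟩,
          Fin.tail_cons _ _⟩
        left_inv := fun w => by
          obtain ⟨⟨q, hqS⟩, hq⟩ := w
          subst hq
          apply Subtype.ext; apply Subtype.ext
          show Fin.cons (q 0) (Fin.tail q) = q
          rw [Fin.cons_self_tail]
        right_inv := fun x => Subtype.ext (by simp) }
    rw [Nat.card_congr E1, Nat.card_congr E2]
    exact Nat.card_congr (Equiv.subtypeEquivRight hiff)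
  -- connectivity
  have reach : ∀ (ℓ : Fin L) (w u : Fin (m+2) → Fin k)
      (hw : ∀ i, c (w i) ≠ ℓ) (hu : ∀ i, c (u i) ≠ ℓ) (hwS : w ∈ S) (huS : u ∈ S),
      Relation.ReflTransGen
        (fun x y : {w : Fin (m+2) → Fin k // w ∈ S} =>
          Fin.init x.1 = Fin.init y.1 ∨ Fin.init x.1 = Fin.tail y.1 ∨
          Fin.tail x.1 = Fin.init y.1 ∨ Fin.tail x.1 = Fin.tail y.1)
        ⟨w, hwS⟩ ⟨u, huS⟩ := by
    intro ℓ w u hw hu hwS huS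
    set mix : ℕ → Fin (m+2) → Fin k := fun t i =>
      if h : (i : ℕ) + t < m + 2 then w ⟨(i : ℕ) + t, h⟩
      else u ⟨((i : ℕ) + t - (m + 2)) % (m + 2), Nat.mod_lt _ (by omega)⟩ with hmix
    have havoid : ∀ t i, c (mix t i) ≠ ℓ := by
      intro t i
      rw [hmix]
      dsimp only
      split
      · exact hw _
      · exact hu _
    have hmixS : ∀ t, mix t ∈ S := fun t =>
      Finset.mem_filter.2 ⟨Finset.mem_univ _, ⟨ℓ, havoid t⟩⟩
    have key : ∀ t, t ≤ m + 2 → Relation.ReflTransGen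
        (fun x y : {w : Fin (m+2) → Fin k // w ∈ S} =>
          Fin.init x.1 = Fin.init y.1 ∨ Fin.init x.1 = Fin.tail y.1 ∨
          Fin.tail x.1 = Fin.init y.1 ∨ Fin.tail x.1 = Fin.tail y.1)
        ⟨w, hwS⟩ ⟨mix t, hmixS t⟩ := by
      intro t
      induction t with
      | zero =>
        intro _
        have h0 : mix 0 = w := by
          funext i
          rw [hmix]
          dsimp only
          rw [dif_pos (by omega)]
          exact congrArg w (Fin.ext (by simp))
        have heq0 : (⟨mix 0, hmixS 0⟩ : {w : Fin (m+2) → Fin k // w ∈ S}) = ⟨w, hwS⟩ :=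
          Subtype.ext h0
        rw [heq0]
      | succ t ih =>
        intro ht
        refine (ih (by omega)).tail ?_
        refine Or.inr (Or.inr (Or.inl ?_))
        funext j
        simp only [Fin.tail, Fin.init, hmix, Fin.val_succ, Fin.coe_castSucc]
        split_ifs with h1 h2 h2
        · exact congrArg w (Fin.ext (by simp; omega))
        · omega
        · omega
        · refine congrArg u (Fin.ext ?_)
          simp only
          rw [Nat.mod_eq_of_lt (by omega), Nat.mod_eq_of_lt (by omega)]
          omega
    have hfin : mix (m + 2) = u := by
      funext i
      rw [hmix]
      dsimp only
      rw [dif_neg (by omega)]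
      refine congrArg u (Fin.ext ?_)
      simp only
      rw [Nat.mod_eq_of_lt (by omega)]
      omega
    have hlast := key (m + 2) le_rfl
    have heq : (⟨mix (m+2), hmixS (m+2)⟩ : {w : Fin (m+2) → Fin k // w ∈ S}) = ⟨u, huS⟩ :=
      Subtype.ext hfin
    rwa [heq] at hlast
  have conn : ∀ x y : {w : Fin (m+2) → Fin k // w ∈ S},
      Relation.ReflTransGen
        (fun x y => Fin.init x.1 = Fin.init y.1 ∨ Fin.init x.1 = Fin.tail y.1 ∨
          Fin.tail x.1 = Fin.init y.1 ∨ Fin.tail x.1 = Fin.tail y.1) x y := by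
    rintro ⟨w, hwS⟩ ⟨u, huS⟩
    obtain ⟨ℓ, hℓ⟩ := (Finset.mem_filter.1 hwS).2
    obtain ⟨ℓ', hℓ'⟩ := (Finset.mem_filter.1 huS).2
    obtain ⟨ℓ'', hne1, hne2⟩ : ∃ ℓ'' : Fin L, ℓ'' ≠ ℓ ∧ ℓ'' ≠ ℓ' := by
      by_contra h
      push_neg at h
      have hsub : (Finset.univ : Finset (Fin L)) ⊆ {ℓ, ℓ'} := by
        intro z _
        rcases eq_or_ne z ℓ with rfl | hz
        · simp
        · simp [h z hz]
      have h1 := Finset.card_le_card hsub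
      have h2 : ({ℓ, ℓ'} : Finset (Fin L)).card ≤ 2 :=
        (Finset.card_insert_le _ _).trans (by simp)
      simp only [Finset.card_univ, Fintype.card_fin] at h1
      omega
    obtain ⟨a, ha⟩ := hc ℓ''
    have haS : (fun _ : Fin (m+2) => a) ∈ S :=
      Finset.mem_filter.2 ⟨Finset.mem_univ _, ⟨ℓ, fun i => by rw [ha]; exact hne1⟩⟩
    exact (reach ℓ w (fun _ => a) hℓ (fun i => by rw [ha]; exact hne1) hwS haS).trans
      (reach ℓ' (fun _ => a) u (fun i => by rw [ha]; exact hne2) hℓ' haS huS)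
  -- apply the abstract Eulerian-circuit lemma
  obtain ⟨e, hbij, hstep⟩ := euler (α := {w // w ∈ S}) S.card (Fintype.card_coe S).symm
    (fun w => Fin.init w.1) (fun w => Fin.tail w.1) deg conn
  -- overlap of consecutive words
  have hover : ∀ (i : ZMod S.card) (j : Fin (m+1)),
      (e (i+1)).1 j.castSucc = (e i).1 j.succ := by
    intro i j
    have h := congrFun (hstep i) j
    simpa [Fin.tail, Fin.init] using h.symm
  have key : ∀ (t : ℕ) (i : ZMod S.card) (j : Fin (m+2)), t ≤ (j : ℕ) →
      (e (i + ((t : ℕ) : ZMod S.card))).1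
        ⟨(j : ℕ) - t, Nat.lt_of_le_of_lt (Nat.sub_le _ _) j.isLt⟩ = (e i).1 j := by
    intro t
    induction t with
    | zero =>
      intro i j h
      simp only [Nat.cast_zero, add_zero]
      exact congrArg _ (Fin.ext (Nat.sub_zero _))
    | succ t ih =>
      intro i j h
      have hj' : (j : ℕ) - (t+1) < m + 1 := by have := j.isLt; omega
      have hcast : (((t+1 : ℕ)) : ZMod S.card) = ((t : ℕ) : ZMod S.card) + 1 := by
        push_cast; ring
      rw [hcast, ← add_assoc]
      calc (e ((i + ((t : ℕ) : ZMod S.card)) + 1)).1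
            ⟨(j : ℕ) - (t+1), Nat.lt_of_le_of_lt (Nat.sub_le _ _) j.isLt⟩
          = (e ((i + ((t : ℕ) : ZMod S.card)) + 1)).1
            (⟨(j : ℕ) - (t+1), hj'⟩ : Fin (m+1)).castSucc := by
            exact congrArg _ (Fin.ext rfl)
        _ = (e (i + ((t : ℕ) : ZMod S.card))).1 (⟨(j : ℕ) - (t+1), hj'⟩ : Fin (m+1)).succ :=
            hover _ _
        _ = (e (i + ((t : ℕ) : ZMod S.card))).1
            ⟨(j : ℕ) - t, Nat.lt_of_le_of_lt (Nat.sub_le _ _) j.isLt⟩ := by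
            refine congrArg _ (Fin.ext ?_)
            simp only [Fin.val_succ]
            omega
        _ = (e i).1 j := ih i j (by omega)
  refine ⟨fun i => (e i).1 ⟨0, by omega⟩, ?_, ?_, ?_⟩
  · -- MapsTo
    intro i _
    show (fun j : Fin (m+2) => (e (i + ((j : ℕ) : ZMod S.card))).1 ⟨0, by omega⟩) ∈ (S : Set _)
    have hword : (fun j : Fin (m+2) =>
        (e (i + ((j : ℕ) : ZMod S.card))).1 ⟨0, by omega⟩) = (e i).1 := by
      funext j
      have hk := key (j : ℕ) i j le_rfl
      rw [← hk]
      exact congrArg _ (Fin.ext (Nat.sub_self _).symm)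
    rw [hword]
    exact (e i).2
  · -- InjOn
    intro i _ i' _ hEq
    have hword : ∀ i : ZMod S.card, (fun j : Fin (m+2) =>
        (e (i + ((j : ℕ) : ZMod S.card))).1 ⟨0, by omega⟩) = (e i).1 := by
      intro i
      funext j
      have hk := key (j : ℕ) i j le_rfl
      rw [← hk]
      exact congrArg _ (Fin.ext (Nat.sub_self _).symm)
    have h : (fun j : Fin (m+2) => (e (i + ((j : ℕ) : ZMod S.card))).1 ⟨0, by omega⟩) =
        (fun j : Fin (m+2) => (e (i' + ((j : ℕ) : ZMod S.card))).1 ⟨0, by omega⟩) := hEq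
    rw [hword i, hword i'] at h
    exact hbij.1 (Subtype.ext h)
  · -- SurjOn
    intro w hw
    obtain ⟨i, hi⟩ := hbij.2 ⟨w, hw⟩
    refine ⟨i, Set.mem_univ i, ?_⟩
    have hword : (fun j : Fin (m+2) =>
        (e (i + ((j : ℕ) : ZMod S.card))).1 ⟨0, by omega⟩) = (e i).1 := by
      funext j
      have hk := key (j : ℕ) i j le_rfl
      rw [← hk]
      exact congrArg _ (Fin.ext (Nat.sub_self _).symm)
    show (fun j : Fin (m+2) => (e (i + ((j : ℕ) : ZMod S.card))).1 ⟨0, by omega⟩) = w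
    rw [hword, hi]
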